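/- For all natural numbers N ≥ 1, all natural numbers m with 0 ≤ m ≤ N − 1, and all natural numbers q with 1 ≤ q ≤ m, one has ∑_{n=0}^{N−1} n^q · h_m(n,N) = 0, where h_m(n,N) = ((m+1)²/N) ∑_{k=0}^m [(−m)_k (n+1)_k (m+2)_k]/[(2)_k (N+1)_k k!]. -/
import Mathlib

open Finset Polynomial

/-- The Pochhammer symbol `(a)_k = a (a+1) ⋯ (a+k-1)` over ℚ. -/
noncomputable def poch (a : ℚ) (k : ℕ) : ℚ := (ascPochhammer ℚ k).eval a

/-- The Shmaliy polynomial `h_m(n,N)`. -/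
noncomputable def shmaliy (m n N : ℕ) : ℚ :=
  (((m : ℚ) + 1) ^ 2 / N) *
    ∑ k ∈ Finset.range (m + 1),
      (poch (-(m : ℚ)) k * poch ((n : ℚ) + 1) k * poch ((m : ℚ) + 2) k) /
        (poch 2 k * poch ((N : ℚ) + 1) k * (k.factorial : ℚ))

lemma poch_zero (a : ℚ) : poch a 0 = 1 := by simp [poch]

lemma poch_succ_right (a : ℚ) (k : ℕ) : poch a (k+1) = poch a k * (a + k) := by
  simp [poch, ascPochhammer_succ_right]

lemma poch_succ_left (a : ℚ) (k : ℕ) : poch a (k+1) = a * poch (a+1) k := by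
  simp [poch, ascPochhammer_succ_left, eval_comp]

lemma poch_pos {a : ℚ} (ha : 0 < a) (k : ℕ) : 0 < poch a k := by
  induction k generalizing a with
  | zero => simp [poch_zero]
  | succ k ih => rw [poch_succ_left]; exact mul_pos ha (ih (by linarith))

lemma poch_add (a : ℚ) (s t : ℕ) : poch a (s+t) = poch a s * poch (a+s) t := by
  have := ascPochhammer_mul ℚ s t
  have h2 := congrArg (Polynomial.eval a) this
  simpa [poch, eval_comp] using h2.symm

lemma poch_two (k : ℕ) : poch 2 k = ((k+1).factorial : ℚ) := by
  induction k with
  | zero => simp [poch_zero]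
  | succ k ih =>
    rw [poch_succ_right, Nat.factorial_succ, Nat.cast_mul, ← ih]
    push_cast
    ring

lemma poch_m2 (m k : ℕ) : poch ((m:ℚ)+2) k * ((m+1).factorial : ℚ) = ((m+k+1).factorial : ℚ) := by
  induction k with
  | zero => simp [poch_zero]
  | succ k ih =>
    rw [poch_succ_right, show m+(k+1)+1 = (m+k+1)+1 by omega,
      show ((m+k+1)+1).factorial = ((m+k+1)+1) * (m+k+1).factorial from Nat.factorial_succ _,
      Nat.cast_mul, ← ih]
    push_cast
    ring

lemma poch_neg (m k : ℕ) (h : k ≤ m) :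
    poch (-(m:ℚ)) k = (-1)^k * (k.factorial : ℚ) * (m.choose k : ℚ) := by
  induction k with
  | zero => simp [poch_zero]
  | succ k ih =>
    have hk : k ≤ m := by omega
    have hch := Nat.add_one_mul_choose_eq m k
    -- (m+1) * m.choose (k+1)?? check direction later
    have hch2 : m.choose (k+1) * (k+1) = m.choose k * (m - k) := Nat.choose_succ_right_eq m k
    have hcast : ((m - k : ℕ) : ℚ) = (m:ℚ) - k := by
      push_cast [Nat.cast_sub hk]; ring
    have hmk : (-(m:ℚ) + k) = -(((m-k:ℕ)):ℚ) := by rw [hcast]; ring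
    rw [poch_succ_right, ih hk, hmk,
      show (k+1).factorial = (k+1) * k.factorial from Nat.factorial_succ _,
      pow_succ, Nat.cast_mul]
    have hq : (m.choose (k+1) : ℚ) * ((k:ℚ)+1) = (m.choose k : ℚ) * ((m-k:ℕ):ℚ) := by
      exact_mod_cast congrArg (Nat.cast : ℕ → ℚ) hch2
    push_cast at hq ⊢
    linear_combination ((-1:ℚ)^k * (k.factorial:ℚ)) * hq

lemma poch_diff (t : ℚ) (s : ℕ) :
    poch (t+1) (s+1) - poch t (s+1) = ((s:ℚ)+1) * poch (t+1) s := by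
  rw [poch_succ_right, poch_succ_left]
  ring

lemma sum_poch_telescope (N s : ℕ) (c : ℚ) :
    ((s:ℚ)+1) * ∑ n ∈ range N, poch ((n:ℚ) + c) s
      = poch ((N:ℚ) + c - 1) (s+1) - poch (c-1) (s+1) := by
  have h := Finset.sum_range_sub (fun n => poch ((n:ℚ) + c - 1) (s+1)) N
  rw [mul_sum]
  calc ∑ n ∈ range N, ((s:ℚ)+1) * poch ((n:ℚ) + c) s
      = ∑ n ∈ range N, (poch (((n+1:ℕ):ℚ) + c - 1) (s+1) - poch ((n:ℚ) + c - 1) (s+1)) := by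
        apply Finset.sum_congr rfl
        intro n _
        have := poch_diff ((n:ℚ) + c - 1) s
        push_cast
        rw [show (n:ℚ) + 1 + c - 1 = ((n:ℚ) + c - 1) + 1 by ring, this,
          show (n:ℚ) + c - 1 + 1 = (n:ℚ) + c by ring]
    _ = poch ((N:ℚ) + c - 1) (s+1) - poch ((0:ℚ) + c - 1) (s+1) := by
        simpa using h
    _ = poch ((N:ℚ) + c - 1) (s+1) - poch (c-1) (s+1) := by norm_num

lemma fall_mul_poch (j k : ℕ) (n : ℚ) :
    (descPochhammer ℚ j).eval n * poch (n+1) k = poch (n - j + 1) (k + j) := by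
  induction j with
  | zero => simp [poch]
  | succ j ih =>
    rw [descPochhammer_succ_right]
    have : (descPochhammer ℚ j * (X - (j:ℚ[X]))).eval n
        = (descPochhammer ℚ j).eval n * (n - j) := by simp
    rw [this, show k + (j+1) = (k+j)+1 by omega]
    rw [mul_comm ((descPochhammer ℚ j).eval n) (n - (j:ℚ)), mul_assoc, ih,
      ← poch_succ_left (n - j) (k+j)]
    congr 1
    push_cast; ring

lemma comp_sub_degree_lt (p : ℚ[X]) (m : ℕ) (hp : p.degree < (m:ℕ) + 1) :
    (p.comp (X + 1) - p).degree < (m:ℕ) := by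
  have hbot : (⊥ : WithBot ℕ) < (m : ℕ) := bot_lt_iff_ne_bot.mpr (by simp)
  by_cases h0 : p = 0
  · rw [h0]; simpa using hbot
  by_cases hc : p.natDegree = 0
  · obtain ⟨c, rfl⟩ := Polynomial.natDegree_eq_zero.mp hc
    have : (C c).comp (X + 1) - C c = 0 := by simp
    rw [this]; simpa using hbot
  · have hX1 : (X + 1 : ℚ[X]).natDegree = 1 := by
      simpa using Polynomial.natDegree_X_add_C (1:ℚ)
    have hdeg : (p.comp (X + 1)).natDegree = p.natDegree := by
      rw [Polynomial.natDegree_comp, hX1, mul_one]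
    have hlc : (p.comp (X + 1)).leadingCoeff = p.leadingCoeff := by
      rw [Polynomial.leadingCoeff_comp (by rw [hX1]; norm_num)]
      have : (X + 1 : ℚ[X]).leadingCoeff = 1 := by
        simpa using Polynomial.leadingCoeff_X_add_C (1:ℚ)
      rw [this, one_pow, mul_one]
    have hcomp0 : p.comp (X + 1) ≠ 0 := by
      intro h
      rw [h] at hlc
      simp at hlc
      exact h0 (Polynomial.leadingCoeff_eq_zero.mp hlc.symm)
    have hdd : (p.comp (X + 1)).degree = p.degree := by
      rw [Polynomial.degree_eq_natDegree hcomp0, Polynomial.degree_eq_natDegree h0, hdeg]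
    have hlt := Polynomial.degree_sub_lt hdd hcomp0 hlc
    rw [hdd] at hlt
    calc (p.comp (X+1) - p).degree < p.degree := hlt
      _ ≤ (p.natDegree : WithBot ℕ) := Polynomial.degree_le_natDegree
      _ ≤ (m : WithBot ℕ) := by
          have h1 : p.degree < ((m+1 : ℕ) : WithBot ℕ) := by exact_mod_cast hp
          have h2 : p.natDegree < m + 1 := (Polynomial.natDegree_lt_iff_degree_lt h0).mpr h1
          exact_mod_cast Nat.lt_succ_iff.mp h2

lemma alt_sum_poly : ∀ (m : ℕ) (p : ℚ[X]), p.degree < (m:ℕ) →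
    ∑ k ∈ range (m+1), (-1:ℚ)^k * (m.choose k : ℚ) * p.eval (k:ℚ) = 0 := by
  intro m
  induction m with
  | zero =>
    intro p hp
    have : p = 0 := by
      by_contra h
      exact absurd hp (not_lt.mpr (Polynomial.zero_le_degree_iff.mpr h))
    simp [this]
  | succ m ih =>
    intro p hp
    set q : ℚ[X] := p.comp (X + 1) - p with hq
    have hqd : q.degree < (m:ℕ) := comp_sub_degree_lt p m (by exact_mod_cast hp)
    have hF : ∀ k : ℕ, ((m+1).choose (k+1) : ℚ) = (m.choose k : ℚ) + (m.choose (k+1) : ℚ) := by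
      intro k; exact_mod_cast congrArg (Nat.cast : ℕ → ℚ) (Nat.choose_succ_succ m k)
    rw [Finset.sum_range_succ' (fun k => (-1:ℚ)^k * ((m+1).choose k : ℚ) * p.eval (k:ℚ)) (m+1)]
    have split : ∑ k ∈ range (m+1), (-1:ℚ)^(k+1) * ((m+1).choose (k+1):ℚ) * p.eval ((k+1:ℕ):ℚ)
        = ∑ k ∈ range (m+1), (-1:ℚ)^(k+1) * (m.choose (k+1):ℚ) * p.eval ((k+1:ℕ):ℚ)
          - ∑ k ∈ range (m+1), (-1:ℚ)^k * (m.choose k:ℚ) * p.eval ((k+1:ℕ):ℚ) := by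
      rw [← Finset.sum_sub_distrib]
      exact Finset.sum_congr rfl (fun k _ => by rw [hF]; push_cast; ring)
    simp only [split]
    have e2 := Finset.sum_range_succ' (fun k => (-1:ℚ)^k * (m.choose k : ℚ) * p.eval (k:ℚ)) (m+1)
    have e3 := Finset.sum_range_succ (fun k => (-1:ℚ)^k * (m.choose k : ℚ) * p.eval (k:ℚ)) (m+1)
    have hGtop : (-1:ℚ)^(m+1) * (m.choose (m+1) : ℚ) * p.eval ((m+1:ℕ):ℚ) = 0 := by
      simp [Nat.choose_succ_self]
    have hsum2 : ∑ k ∈ range (m+1), (-1:ℚ)^(k+1) * (m.choose (k+1):ℚ) * p.eval ((k+1:ℕ):ℚ)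
        + (-1:ℚ)^0 * ((m+1).choose 0 : ℚ) * p.eval ((0:ℕ):ℚ)
        = ∑ k ∈ range (m+1), (-1:ℚ)^k * (m.choose k : ℚ) * p.eval (k:ℚ) := by
      have : (-1:ℚ)^0 * ((m+1).choose 0 : ℚ) * p.eval ((0:ℕ):ℚ)
          = (-1:ℚ)^0 * (m.choose 0 : ℚ) * p.eval ((0:ℕ):ℚ) := by norm_num
      rw [this, ← e2, e3, hGtop, add_zero]
    have hqsum : ∑ k ∈ range (m+1), (-1:ℚ)^k * (m.choose k:ℚ) * p.eval ((k+1:ℕ):ℚ)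
        - ∑ k ∈ range (m+1), (-1:ℚ)^k * (m.choose k : ℚ) * p.eval (k:ℚ)
        = ∑ k ∈ range (m+1), (-1:ℚ)^k * (m.choose k : ℚ) * q.eval (k:ℚ) := by
      rw [← Finset.sum_sub_distrib]
      refine Finset.sum_congr rfl (fun k _ => ?_)
      have : q.eval (k:ℚ) = p.eval ((k:ℚ)+1) - p.eval (k:ℚ) := by
        simp [hq, Polynomial.eval_comp]
      rw [this]; push_cast; ring
    have hZ := ih q hqd
    -- goal : (A - B) + F0 = 0  where A - hsum2/hqsum relations
    -- goal currently: ∑ A - ∑ B + F0 = 0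
    have : ∑ k ∈ range (m+1), (-1:ℚ)^(k+1) * (m.choose (k+1):ℚ) * p.eval ((k+1:ℕ):ℚ)
        - ∑ k ∈ range (m+1), (-1:ℚ)^k * (m.choose k:ℚ) * p.eval ((k+1:ℕ):ℚ)
        + (-1:ℚ)^0 * ((m+1).choose 0 : ℚ) * p.eval ((0:ℕ):ℚ) = 0 := by
      linarith [hsum2, hZ, hqsum]
    exact this

lemma fact_prod (m k : ℕ) :
    ((m+k+1).factorial : ℚ) = ((k+1).factorial : ℚ) * ∏ i ∈ range m, ((k:ℚ)+i+2) := by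
  induction m with
  | zero => simp
  | succ m ih =>
    rw [prod_range_succ, show m+1+k+1 = (m+k+1)+1 by omega,
      show ((m+k+1)+1).factorial = ((m+k+1)+1)*(m+k+1).factorial from Nat.factorial_succ _,
      Nat.cast_mul, ih]
    push_cast; ring

lemma key_fall (N m j : ℕ) (hN : 1 ≤ N) (hj1 : 1 ≤ j) (hjm : j ≤ m) :
    ∑ n ∈ range N, (descPochhammer ℚ j).eval (n:ℚ) * shmaliy m n N = 0 := by
  set Q : ℚ[X] := ∏ i ∈ (range m).erase (j-1), (X + C ((i:ℚ)+2)) with hQdef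
  have hjmem : j - 1 ∈ range m := mem_range.mpr (by omega)
  have hQeval : ∀ k : ℕ, Q.eval (k:ℚ) = ∏ i ∈ (range m).erase (j-1), ((k:ℚ)+i+2) := by
    intro k; rw [hQdef, Polynomial.eval_prod]
    exact prod_congr rfl (fun i _ => by simp; ring)
  have hprod : ∀ k : ℕ, ∏ i ∈ range m, ((k:ℚ)+i+2) = ((k:ℚ)+j+1) * Q.eval (k:ℚ) := by
    intro k
    rw [← Finset.mul_prod_erase (range m) _ hjmem, hQeval]
    congr 1
    rw [Nat.cast_sub hj1]
    push_cast; ring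
  have hQne : Q ≠ 0 := by
    rw [hQdef]
    exact prod_ne_zero_iff.mpr (fun i _ => (Polynomial.monic_X_add_C _).ne_zero)
  have hQdeg : Q.degree < (m:ℕ) := by
    rw [Polynomial.degree_eq_natDegree hQne]
    have hnd : Q.natDegree = ((range m).erase (j-1)).card := by
      rw [hQdef, Polynomial.natDegree_prod _ _ (fun i _ => (Polynomial.monic_X_add_C _).ne_zero),
        Finset.card_eq_sum_ones]
      exact sum_congr rfl (fun i _ => Polynomial.natDegree_X_add_C _)
    rw [hnd, Finset.card_erase_of_mem hjmem, Finset.card_range]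
    exact_mod_cast (by omega : m - 1 < m)
  -- inner telescoped sum
  have hinner : ∀ k : ℕ, ((k:ℚ)+j+1) * ∑ n ∈ range N, poch ((n:ℚ) - j + 1) (k+j)
      = poch ((N:ℚ)-j) j * ((N:ℚ) * poch ((N:ℚ)+1) k) := by
    intro k
    have ht := sum_poch_telescope N (k+j) (1-(j:ℚ))
    have e1 : ∑ n ∈ range N, poch ((n:ℚ) + (1-(j:ℚ))) (k+j)
        = ∑ n ∈ range N, poch ((n:ℚ) - j + 1) (k+j) := by
      exact Finset.sum_congr rfl (fun n _ => by congr 1; ring)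
    rw [e1] at ht
    have e2 : poch ((N:ℚ) + (1-(j:ℚ)) - 1) (k+j+1) = poch ((N:ℚ) - j) (k+j+1) := by
      congr 1; ring
    have e3 : poch ((1-(j:ℚ)) - 1) (k+j+1) = 0 := by
      have : (1-(j:ℚ)) - 1 = -(j:ℚ) := by ring
      rw [this, show k+j+1 = j+(k+1) by omega, poch_add, poch_succ_left]
      simp
    rw [e2, e3, sub_zero] at ht
    have e4 : poch ((N:ℚ) - j) (k+j+1) = poch ((N:ℚ)-j) j * ((N:ℚ) * poch ((N:ℚ)+1) k) := by
      rw [show k+j+1 = j+(k+1) by omega, poch_add, show (N:ℚ) - j + j = (N:ℚ) by ring,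
        poch_succ_left]
    rw [e4] at ht
    have : ((k:ℚ)+j+1) = ((k+j:ℕ):ℚ)+1 := by push_cast; ring
    rw [this, ht]
  -- swap sums
  have swap : ∑ n ∈ range N, (descPochhammer ℚ j).eval (n:ℚ) * shmaliy m n N
      = (((m:ℚ)+1)^2/N) * ∑ k ∈ range (m+1), ∑ n ∈ range N,
          (descPochhammer ℚ j).eval (n:ℚ) *
          ((poch (-(m:ℚ)) k * poch ((n:ℚ)+1) k * poch ((m:ℚ)+2) k) /
           (poch 2 k * poch ((N:ℚ)+1) k * (k.factorial:ℚ))) := by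
    unfold shmaliy
    rw [Finset.sum_comm (s := range (m+1)) (t := range N), Finset.mul_sum]
    apply Finset.sum_congr rfl
    intro n _
    rw [Finset.mul_sum, Finset.mul_sum, Finset.mul_sum]
    exact Finset.sum_congr rfl (fun k _ => by ring)
  rw [swap]
  have hkey : ∀ k ∈ range (m+1), ∑ n ∈ range N,
          (descPochhammer ℚ j).eval (n:ℚ) *
          ((poch (-(m:ℚ)) k * poch ((n:ℚ)+1) k * poch ((m:ℚ)+2) k) /
           (poch 2 k * poch ((N:ℚ)+1) k * (k.factorial:ℚ)))
      = ((N:ℚ) * poch ((N:ℚ)-j) j / ((m+1).factorial : ℚ)) *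
          ((-1:ℚ)^k * (m.choose k : ℚ) * Q.eval (k:ℚ)) := by
    intro k hk
    have hkm : k ≤ m := by simpa [Nat.lt_succ_iff] using mem_range.mp hk
    have step1 : ∀ n : ℕ,
        (descPochhammer ℚ j).eval (n:ℚ) *
          ((poch (-(m:ℚ)) k * poch ((n:ℚ)+1) k * poch ((m:ℚ)+2) k) /
           (poch 2 k * poch ((N:ℚ)+1) k * (k.factorial:ℚ)))
        = (poch (-(m:ℚ)) k * poch ((m:ℚ)+2) k /
           (poch 2 k * poch ((N:ℚ)+1) k * (k.factorial:ℚ))) * poch ((n:ℚ) - j + 1) (k+j) := by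
      intro n
      rw [← fall_mul_poch j k (n:ℚ)]
      ring
    rw [Finset.sum_congr rfl (fun n _ => step1 n), ← Finset.mul_sum]
    -- now multiply/divide by (k+j+1)
    have hkj : ((k:ℚ)+j+1) ≠ 0 := by positivity
    have hsum : ∑ n ∈ range N, poch ((n:ℚ) - j + 1) (k+j)
        = poch ((N:ℚ)-j) j * ((N:ℚ) * poch ((N:ℚ)+1) k) / ((k:ℚ)+j+1) := by
      rw [eq_div_iff hkj, mul_comm]
      exact hinner k
    rw [hsum]
    have hNp : poch ((N:ℚ)+1) k ≠ 0 := ne_of_gt (poch_pos (by positivity) k)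
    have hB : poch ((m:ℚ)+2) k = ((m+k+1).factorial : ℚ) / ((m+1).factorial : ℚ) := by
      rw [eq_div_iff (by exact_mod_cast (Nat.factorial_ne_zero (m+1)))]
      exact poch_m2 m k
    have hMK : ((m+k+1).factorial : ℚ) = ((k+1).factorial : ℚ) * (((k:ℚ)+j+1) * Q.eval (k:ℚ)) := by
      rw [fact_prod m k, hprod k]
    rw [poch_neg m k hkm, poch_two, hB, hMK]
    have h1 : ((k+1).factorial : ℚ) ≠ 0 := by exact_mod_cast Nat.factorial_ne_zero (k+1)
    have h2 : ((k).factorial : ℚ) ≠ 0 := by exact_mod_cast Nat.factorial_ne_zero k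
    have h3 : ((m+1).factorial : ℚ) ≠ 0 := by exact_mod_cast Nat.factorial_ne_zero (m+1)
    field_simp
  rw [Finset.sum_congr rfl hkey, ← Finset.mul_sum, alt_sum_poly m Q hQdeg]
  ring

theorem shmaliy_annihilates_monomials (N m q : ℕ) (hN : 1 ≤ N) (hm : m ≤ N - 1)
    (hq1 : 1 ≤ q) (hqm : q ≤ m) :
    ∑ n ∈ Finset.range N, (n : ℚ) ^ q * shmaliy m n N = 0 := by
  clear hm
  induction q using Nat.strong_induction_on with
  | _ q ih =>
    set p : ℚ[X] := descPochhammer ℚ q with hp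
    have hkey := key_fall N m q hN hq1 hqm
    have hdeg : p.natDegree = q := descPochhammer_natDegree (R := ℚ) q
    have hcq : p.coeff q = 1 := by
      have := (monic_descPochhammer ℚ q).coeff_natDegree
      rwa [hdeg] at this
    have heval : ∀ x : ℚ, p.eval x = x^q + ∑ i ∈ range q, p.coeff i * x^i := by
      intro x
      have h := Polynomial.eval_eq_sum_range' (p := p) (n := q+1) (by omega) x
      rw [Finset.sum_range_succ, hcq, one_mul] at h
      rw [h]; ring
    have expand : ∀ n : ℕ, (n:ℚ)^q * shmaliy m n N
        = p.eval (n:ℚ) * shmaliy m n N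
          - ∑ i ∈ range q, p.coeff i * ((n:ℚ)^i * shmaliy m n N) := by
      intro n
      rw [heval, add_mul, Finset.sum_mul]
      have : ∑ i ∈ range q, p.coeff i * (n:ℚ)^i * shmaliy m n N
          = ∑ i ∈ range q, p.coeff i * ((n:ℚ)^i * shmaliy m n N) :=
        Finset.sum_congr rfl (fun i _ => by ring)
      rw [this]; ring
    rw [Finset.sum_congr rfl (fun n _ => expand n), Finset.sum_sub_distrib, hkey,
      Finset.sum_comm, zero_sub, neg_eq_zero]
    apply Finset.sum_eq_zero
    intro i hi
    have hi' : i < q := mem_range.mp hi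
    rw [← Finset.mul_sum]
    rcases Nat.eq_zero_or_pos i with h0 | h1
    · have : p.coeff 0 = 0 := by
        rw [Polynomial.coeff_zero_eq_eval_zero, hp, descPochhammer_eval_zero,
          if_neg (by omega)]
      rw [h0, this, zero_mul]
    · rw [ih i hi' h1 (by omega), mul_zero]
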